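/- For all integers k ≥ 1 and sufficiently large n relative to k, and for any integer C with C > 20^k and C√n ≤ n/2: d_{2k}(n, C√n) < (1/2)*binom(n-1, 2k-1) - 20^k * n^{k-1/2}, where d_{2k}(n,t) is the degree of a vertex in the larger part of B^(2k)(n,t). -/
import Mathlib


/-- Generalized binomial coefficient `binom(x,j) = x(x-1)⋯(x-j+1)/j!` for real `x`. -/
noncomputable def rchoose (x : ℝ) (j : ℕ) : ℝ :=
  (∏ i ∈ Finset.range j, (x - i)) / (Nat.factorial j)

/-- The binary Krawtchouk polynomial `K_m^n(x) = ∑_{i=0}^m (-1)^i binom(x,i) binom(n-x,m-i)`. -/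
noncomputable def kraw (m n : ℕ) (x : ℝ) : ℝ :=
  ∑ i ∈ Finset.range (m + 1), (-1 : ℝ) ^ i * rchoose x i * rchoose ((n : ℝ) - x) (m - i)

/-- The degree `d_{2k}(n,t)` of a vertex in the part of size `n/2 + t` of `B^(2k)(n,t)`,
via the formula `d_{2k}(n,t) = (1/2)(binom(n-1,2k-1) + K_{2k-1}^{n-1}(n/2 + t - 1))`. -/
noncomputable def d2k (k n : ℕ) (t : ℝ) : ℝ :=
  (1 / 2) * (((n - 1).choose (2 * k - 1) : ℝ) +
    kraw (2 * k - 1) (n - 1) ((n : ℝ) / 2 + t - 1))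


section Helpers
open Finset Polynomial

lemma descPochhammer_smeval_real (x : ℝ) (j : ℕ) :
    (descPochhammer ℤ j).smeval x = ∏ i ∈ range j, (x - i) := by
  induction j with
  | zero => simp [descPochhammer_zero, Polynomial.smeval_one]
  | succ j ih =>
      rw [descPochhammer_succ_right, Polynomial.smeval_mul, ih, prod_range_succ,
        Polynomial.smeval_sub, Polynomial.smeval_X, Polynomial.smeval_natCast]
      simp

lemma rchoose_eq (x : ℝ) (j : ℕ) : rchoose x j = Ring.choose x j := by
  have h := Ring.descPochhammer_eq_factorial_smul_choose (R := ℝ) x j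
  rw [descPochhammer_smeval_real, nsmul_eq_mul] at h
  rw [rchoose, h]
  field_simp

lemma rchoose_natCast (N j : ℕ) : rchoose (N : ℝ) j = N.choose j := by
  rw [rchoose_eq, Ring.choose_natCast]

lemma rchoose_vandermonde (u v : ℝ) (m : ℕ) :
    rchoose (u + v) m = ∑ i ∈ range (m + 1), rchoose u i * rchoose v (m - i) := by
  rw [rchoose_eq, Ring.add_choose_eq m (Commute.all u v)]
  rw [Finset.Nat.sum_antidiagonal_eq_sum_range_succ (fun a b => Ring.choose u a * Ring.choose v b)]
  simp [rchoose_eq]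


lemma coeff_one_sub_X_pow (N i : ℕ) :
    ((1 - Polynomial.X : Polynomial ℝ) ^ N).coeff i = (-1 : ℝ) ^ i * N.choose i := by
  have h : (1 - Polynomial.X : Polynomial ℝ) = (-1 : ℝ[X]) * (Polynomial.X + Polynomial.C (-1)) := by
    rw [Polynomial.C_neg, Polynomial.C_1]; ring
  rw [h, mul_pow, ← Polynomial.C_1, ← Polynomial.C_neg, ← Polynomial.C_pow, Polynomial.coeff_C_mul,
    Polynomial.coeff_X_add_C_pow]
  rcases le_or_gt i N with hi | hi
  · have hNi : (-1:ℝ)^(N-i) = (-1)^(N+i) := by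
      rw [show N + i = (N-i) + 2*i by omega, pow_add, pow_mul]; simp
    have hsq : (-1:ℝ)^N * (-1)^N = 1 := by
      rw [← pow_add, ← two_mul, pow_mul]; norm_num
    rw [hNi, pow_add]
    linear_combination ((-1:ℝ)^i * (N.choose i : ℝ)) * hsq
  · simp [Nat.choose_eq_zero_of_lt hi]

lemma D_nat (N u : ℕ) :
    ∑ s ∈ range (u + 1), (-1 : ℝ) ^ s * N.choose s * N.choose (u - s)
      = if Even u then (-1 : ℝ) ^ (u / 2) * N.choose (u / 2) else 0 := by
  have key : ((1 - Polynomial.X : Polynomial ℝ) ^ N * (1 + Polynomial.X) ^ N)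
      = Polynomial.expand ℝ 2 ((1 - Polynomial.X) ^ N) := by
    rw [← mul_pow, map_pow, map_sub, map_one, Polynomial.expand_X]
    congr 1; ring
  have h1 := congrArg (fun p => Polynomial.coeff p u) key
  simp only [Polynomial.coeff_mul, Polynomial.coeff_expand (by norm_num : 0 < 2)] at h1
  rw [Finset.Nat.sum_antidiagonal_eq_sum_range_succ
    (fun a b => ((1 - Polynomial.X : Polynomial ℝ) ^ N).coeff a
      * ((1 + Polynomial.X : Polynomial ℝ) ^ N).coeff b)] at h1
  simp only [coeff_one_sub_X_pow, Polynomial.coeff_one_add_X_pow] at h1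
  rw [h1]
  have h2 : (2 ∣ u) = (Even u) :=
    propext ⟨fun ⟨c, hc⟩ => ⟨c, by omega⟩, fun ⟨c, hc⟩ => ⟨c, by omega⟩⟩
  simp only [h2]


noncomputable def PB (j : ℕ) : Polynomial ℝ :=
  Polynomial.C ((j.factorial : ℝ)⁻¹) * ∏ i ∈ range j, (Polynomial.X - Polynomial.C (i : ℝ))

lemma PB_eval (x : ℝ) (j : ℕ) : (PB j).eval x = rchoose x j := by
  simp [PB, rchoose, Polynomial.eval_prod, div_eq_inv_mul]

lemma D_real (u : ℕ) (b : ℝ) :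
    ∑ s ∈ range (u + 1), (-1 : ℝ) ^ s * rchoose b s * rchoose b (u - s)
      = if Even u then (-1 : ℝ) ^ (u / 2) * rchoose b (u / 2) else 0 := by
  set Q : Polynomial ℝ := (∑ s ∈ range (u + 1), Polynomial.C ((-1 : ℝ) ^ s) * PB s * PB (u - s))
      - (if Even u then Polynomial.C ((-1 : ℝ) ^ (u / 2)) * PB (u / 2) else 0) with hQ
  have hev : ∀ x : ℝ, Q.eval x
      = (∑ s ∈ range (u + 1), (-1 : ℝ) ^ s * rchoose x s * rchoose x (u - s))
        - (if Even u then (-1 : ℝ) ^ (u / 2) * rchoose x (u / 2) else 0) := by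
    intro x
    by_cases h : Even u <;>
      simp [hQ, h, Polynomial.eval_finset_sum, PB_eval]
  have hQ0 : Q = 0 := by
    apply Polynomial.eq_zero_of_infinite_isRoot
    apply Set.Infinite.mono ?_ (Set.infinite_range_of_injective (Nat.cast_injective (R := ℝ)))
    rintro x ⟨N, rfl⟩
    show Q.IsRoot N
    rw [Polynomial.IsRoot, hev]
    simp only [rchoose_natCast, D_nat, sub_self]
  have hb := congrArg (Polynomial.eval b) hQ0
  rw [hev b, Polynomial.eval_zero] at hb
  linarith [hb]


lemma kraw_eq (m N : ℕ) (x : ℝ) :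
    kraw m N x = ∑ r ∈ range (m + 1), (-1 : ℝ) ^ r * rchoose (2 * x - (N : ℝ)) r *
      (if Even (m - r) then (-1 : ℝ) ^ ((m - r) / 2) * rchoose ((N : ℝ) - x) ((m - r) / 2)
        else 0) := by
  have hx : ∀ i, rchoose x i
      = ∑ r ∈ range (i + 1), rchoose (2 * x - (N : ℝ)) r * rchoose ((N : ℝ) - x) (i - r) := by
    intro i
    rw [← rchoose_vandermonde]
    ring_nf
  calc kraw m N x
      = ∑ i ∈ range (m + 1), ∑ r ∈ range (i + 1),
          (-1 : ℝ) ^ i * (rchoose (2 * x - (N : ℝ)) r * rchoose ((N : ℝ) - x) (i - r))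
            * rchoose ((N : ℝ) - x) (m - i) := by
        unfold kraw
        refine sum_congr rfl fun i _ => ?_
        rw [hx i, Finset.mul_sum, Finset.sum_mul]
    _ = ∑ r ∈ range (m + 1), ∑ i ∈ Finset.Ico r (m + 1),
          (-1 : ℝ) ^ i * (rchoose (2 * x - (N : ℝ)) r * rchoose ((N : ℝ) - x) (i - r))
            * rchoose ((N : ℝ) - x) (m - i) := by
        simp_rw [range_eq_Ico]
        rw [Finset.sum_Ico_Ico_comm]
    _ = ∑ r ∈ range (m + 1), (-1 : ℝ) ^ r * rchoose (2 * x - (N : ℝ)) r *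
          (∑ s ∈ range (m - r + 1),
            (-1 : ℝ) ^ s * rchoose ((N : ℝ) - x) s * rchoose ((N : ℝ) - x) ((m - r) - s)) := by
        refine sum_congr rfl fun r hr => ?_
        rw [mem_range] at hr
        rw [Finset.sum_Ico_eq_sum_range]
        rw [show m + 1 - r = m - r + 1 by omega]
        rw [Finset.mul_sum]
        refine sum_congr rfl fun s hs => ?_
        rw [mem_range] at hs
        rw [show r + s - r = s by omega, show m - (r + s) = m - r - s by omega, pow_add]
        ring
    _ = _ := by
        refine sum_congr rfl fun r hr => ?_
        rw [D_real]


lemma rchoose_zero (x : ℝ) : rchoose x 0 = 1 := by simp [rchoose]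

lemma rchoose_abs_le (x : ℝ) (j : ℕ) (M : ℝ) (hM : 0 ≤ M)
    (h : ∀ i : ℕ, i < j → |x - i| ≤ M) :
    |rchoose x j| ≤ M ^ j / j.factorial := by
  rw [rchoose, abs_div, Nat.abs_cast]
  apply div_le_div_of_nonneg_right ?_ (by positivity)
  rw [Finset.abs_prod]
  calc ∏ i ∈ range j, |x - (i : ℝ)| ≤ ∏ i ∈ range j, M := by
        apply Finset.prod_le_prod (fun i _ => abs_nonneg _) (fun i hi => h i (mem_range.mp hi))
    _ = M ^ j := by rw [prod_const, card_range]

lemma rchoose_ge (x : ℝ) (j : ℕ) (L : ℝ) (hL : 0 ≤ L)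
    (h : ∀ i : ℕ, i < j → L ≤ x - i) :
    L ^ j / j.factorial ≤ rchoose x j := by
  rw [rchoose]
  apply div_le_div_of_nonneg_right ?_ (by positivity)
  calc L ^ j = ∏ i ∈ range j, L := by rw [prod_const, card_range]
    _ ≤ ∏ i ∈ range j, (x - (i : ℝ)) :=
        Finset.prod_le_prod (fun i _ => hL) (fun i hi => h i (mem_range.mp hi))

lemma factorial_le_mul_pow (r d : ℕ) : (r + d).factorial ≤ r.factorial * (r + d + 1) ^ d := by
  induction d with
  | zero => simp
  | succ d ih =>
      rw [show r + (d+1) = (r + d) + 1 by omega, Nat.factorial_succ]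
      calc (r + d + 1) * (r + d).factorial ≤ (r + d + 1) * (r.factorial * (r + d + 1) ^ d) :=
            Nat.mul_le_mul_left _ ih
        _ = r.factorial * (r + d + 1) ^ (d + 1) := by ring
        _ ≤ r.factorial * (r + d + 1 + 1) ^ (d + 1) := by
            apply Nat.mul_le_mul_left
            exact Nat.pow_le_pow_left (by omega) _
        _ = r.factorial * (r + (d + 1) + 1) ^ (d + 1) := by ring_nf

lemma sq_le_400pow (k : ℕ) (hk : 1 ≤ k) : 392 * k ^ 2 ≤ 400 ^ k := by
  induction k with
  | zero => omega
  | succ k ih =>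
      rcases Nat.eq_or_lt_of_le hk with h | h
      · simp [← h]
      · have hk1 : 1 ≤ k := by omega
        have := ih hk1
        have h2 : 392 * (k+1)^2 ≤ 4 * (392 * k^2) := by nlinarith
        calc 392 * (k+1)^2 ≤ 4 * (392 * k^2) := h2
          _ ≤ 4 * 400 ^ k := by omega
          _ ≤ 400 * 400 ^ k := by
              apply Nat.mul_le_mul_right; omega
          _ = 400 ^ (k+1) := by rw [pow_succ]; ring

lemma ten_mul_le (k : ℕ) (hk : 1 ≤ k) : 10 * (2 * k - 1) ≤ 20 ^ k := by
  induction k with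
  | zero => omega
  | succ k ih =>
      rcases Nat.eq_or_lt_of_le hk with h | h
      · simp [← h]
      · have hk1 : 1 ≤ k := by omega
        have h1 := ih hk1
        calc 10 * (2 * (k+1) - 1) ≤ 20 * (10 * (2 * k - 1)) := by omega
          _ ≤ 20 * 20 ^ k := by omega
          _ = 20 ^ (k+1) := by rw [pow_succ]; ring

lemma keyIneq (k : ℕ) (hk : 1 ≤ k) :
    2 * (20:ℝ)^k * ((2*k-1).factorial : ℝ) < (24/25) * (2 * ((20:ℝ)^k + 1)) ^ (2*k-1) := by
  rcases Nat.eq_or_lt_of_le hk with h | h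
  · rw [← h]; norm_num
  · have hk2 : 2 ≤ k := h
    set m := 2*k-1 with hm
    have hA : (0:ℝ) < 20^k := by positivity
    have hten : (10:ℝ) * ((m:ℕ):ℝ) ≤ 20^k := by
      exact_mod_cast ten_mul_le k hk
    have hfact : ((m).factorial : ℝ) ≤ ((20:ℝ)^k / 10)^m := by
      calc ((m).factorial : ℝ) ≤ ((m:ℕ):ℝ)^m := by exact_mod_cast Nat.factorial_le_pow m
        _ ≤ ((20:ℝ)^k/10)^m := by
            apply pow_le_pow_left₀ (by positivity)
            linarith
    have hmk : m = k + (k - 1) := by omega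
    have h20 : (20:ℝ)^m = 20^k * 20^(k-1) := by rw [hmk, pow_add]
    have h20k1 : (20:ℝ) ≤ 20^(k-1) := by
      calc (20:ℝ) = 20^1 := by norm_num
        _ ≤ 20^(k-1) := by apply pow_le_pow_right₀ (by norm_num); omega
    have key : 2 * (20:ℝ)^k * ((20:ℝ)^k / 10)^m < (24/25) * (2 * (20:ℝ)^k) ^ m := by
      rw [div_pow, mul_pow]
      rw [show 2 * (20:ℝ)^k * (((20:ℝ)^k)^m / 10^m) = (2 * (20:ℝ)^k / 10^m) * ((20:ℝ)^k)^m by ring]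
      rw [show (24/25 : ℝ) * (2^m * ((20:ℝ)^k)^m) = (24/25 * 2^m) * ((20:ℝ)^k)^m by ring]
      apply mul_lt_mul_of_pos_right _ (by positivity)
      rw [div_lt_iff₀ (by positivity), mul_assoc, ← mul_pow]
      norm_num
      rw [h20]
      nlinarith [hA, h20k1]
    calc 2 * (20:ℝ)^k * ((m).factorial : ℝ) ≤ 2 * 20^k * ((20:ℝ)^k / 10)^m := by
          apply mul_le_mul_of_nonneg_left hfact (by positivity)
      _ < (24/25) * (2 * (20:ℝ)^k) ^ m := key
      _ ≤ (24/25) * (2 * ((20:ℝ)^k + 1)) ^ m := by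
          apply mul_le_mul_of_nonneg_left _ (by norm_num)
          apply pow_le_pow_left₀ (by positivity)
          linarith


set_option maxHeartbeats 1000000 in
/-- for `k ≥ 1`, sufficiently large `n`, and any integer `C` with
`C > 20^k` and `C√n ≤ n/2`:
`d_{2k}(n, C√n) < (1/2) binom(n-1, 2k-1) - 20^k n^{k-1/2}`. -/
theorem stmt_18 (k : ℕ) (hk : 1 ≤ k) :
    ∃ n0 : ℕ, ∀ n : ℕ, n0 ≤ n → ∀ C : ℕ, 20 ^ k < C →
      (C : ℝ) * Real.sqrt n ≤ (n : ℝ) / 2 →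
      d2k k n ((C : ℝ) * Real.sqrt n) <
        (1 / 2) * ((n - 1).choose (2 * k - 1) : ℝ) -
          20 ^ k * ((n : ℝ) ^ k / Real.sqrt n) := by
  refine ⟨1600 * k ^ 4 + 100, fun n hn C hC hCn => ?_⟩
  obtain ⟨m, hmdef⟩ : ∃ m', m' = 2 * k - 1 := ⟨_, rfl⟩
  have hm1 : m + 1 = 2 * k := by omega
  have hn1 : 1 ≤ n := by omega
  have hnR : (1:ℝ) ≤ (n:ℝ) := by exact_mod_cast hn1
  have hkR : (1:ℝ) ≤ (k:ℝ) := by exact_mod_cast hk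
  have hsq : Real.sqrt n ^ 2 = (n:ℝ) := Real.sq_sqrt (by positivity)
  have hsqpos : 0 < Real.sqrt n := Real.sqrt_pos.mpr (by positivity)
  have hsn : 40 * (k:ℝ)^2 ≤ Real.sqrt n := by
    rw [show (40 * (k:ℝ)^2) = Real.sqrt ((40 * (k:ℝ)^2)^2) by
      rw [Real.sqrt_sq (by positivity)]]
    apply Real.sqrt_le_sqrt
    have h4 : (1600 * (k:ℝ)^4) ≤ (n:ℝ) := by exact_mod_cast le_trans (by omega) hn
    nlinarith
  obtain ⟨t, htdef⟩ : ∃ t', t' = (C:ℝ) * Real.sqrt n := ⟨_, rfl⟩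
  rw [← htdef] at hCn
  have hCreal : (20:ℝ)^k + 1 ≤ (C:ℝ) := by
    have h' : 20^k + 1 ≤ C := hC
    exact_mod_cast h'
  have h20k : (21:ℝ) ≤ (20:ℝ)^k + 1 := by
    have h' : (20:ℝ)^1 ≤ 20^k := pow_le_pow_right₀ (by norm_num) hk
    rw [pow_one] at h'
    linarith
  have htpos : 0 < t := by
    rw [htdef]; apply mul_pos (by linarith) hsqpos
  have ht800 : 800 * (k:ℝ)^2 ≤ t := by
    rw [htdef]
    calc 800 * (k:ℝ)^2 ≤ 21 * (40 * (k:ℝ)^2) := by nlinarith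
      _ ≤ (C:ℝ) * Real.sqrt n := by
          apply mul_le_mul (by linarith) hsn (by positivity) (by linarith)
  have ht2 : (400:ℝ)^k * n ≤ t^2 := by
    have hC2 : ((20:ℝ)^k)^2 ≤ (C:ℝ)^2 := by nlinarith
    have h4 : ((20:ℝ)^k)^2 = (400:ℝ)^k := by
      rw [← pow_mul, mul_comm, pow_mul]; norm_num
    calc (400:ℝ)^k * n = ((20:ℝ)^k)^2 * n := by rw [h4]
      _ ≤ (C:ℝ)^2 * n := by
          apply mul_le_mul_of_nonneg_right hC2 (by positivity)
      _ = t^2 := by rw [htdef, mul_pow, hsq]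
  obtain ⟨b, hbdef⟩ : ∃ b', b' = (n:ℝ)/2 - t := ⟨_, rfl⟩
  have hb0 : 0 ≤ b := by rw [hbdef]; linarith [hCn]
  have hbn : b ≤ (n:ℝ)/2 := by rw [hbdef]; linarith
  have hN : ((n-1 : ℕ):ℝ) = (n:ℝ) - 1 := by
    rw [Nat.cast_sub hn1]; simp
  have hmR : ((m:ℕ):ℝ) = 2*(k:ℝ) - 1 := by
    rw [hmdef]; push_cast [Nat.cast_sub (by omega : 1 ≤ 2*k)]; ring
  obtain ⟨x, hxdef⟩ : ∃ x', x' = (n:ℝ)/2 + t - 1 := ⟨_, rfl⟩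
  have hxval : 2 * x - ((n-1:ℕ):ℝ) = 2*t - 1 := by rw [hN, hxdef]; ring
  have hbval : ((n-1:ℕ):ℝ) - x = b := by rw [hN, hxdef, hbdef]; ring
  have hkraw : kraw m (n-1) x
      = ∑ r ∈ range (m+1), (-1:ℝ)^r * rchoose (2*t-1) r *
          (if Even (m - r) then (-1:ℝ)^((m-r)/2) * rchoose b ((m-r)/2) else 0) := by
    rw [kraw_eq]
    simp only [hxval, hbval]
  obtain ⟨B, hBdef⟩ : ∃ B', B' = (2*t)^m / (m.factorial : ℝ) := ⟨_, rfl⟩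
  have hfactpos : (0:ℝ) < (m.factorial : ℝ) := by exact_mod_cast m.factorial_pos
  have hBpos : 0 < B := by rw [hBdef]; positivity
  have hmk2 : (m:ℝ) ≤ 2*(k:ℝ) := by rw [hmR]; linarith
  have htk : (k:ℝ) ≤ t := by nlinarith
  -- main term lower bound
  have hmain : (399/400) * B ≤ rchoose (2*t-1) m := by
    have hL0 : (0:ℝ) ≤ 2*t - 2*k := by linarith
    have hlow := rchoose_ge (2*t-1) m (2*t - 2*(k:ℝ)) hL0 ?_
    · refine le_trans ?_ hlow
      rw [hBdef, show (399/400:ℝ) * ((2*t)^m / (m.factorial:ℝ))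
        = (399/400 * (2*t)^m) / (m.factorial:ℝ) by ring]
      apply div_le_div_of_nonneg_right ?_ (by positivity)
      have hε0 : (0:ℝ) ≤ (k:ℝ)/t := by positivity
      have hε1 : (k:ℝ)/t ≤ 1 := by
        rw [div_le_one htpos]; linarith
      have hmε : (m:ℝ)*((k:ℝ)/t) ≤ 1/400 := by
        rw [show (m:ℝ) * ((k:ℝ)/t) = ((m:ℝ)*(k:ℝ))/t by ring,
          div_le_div_iff₀ htpos (by norm_num : (0:ℝ) < 400)]
        calc (m:ℝ)*(k:ℝ)*400 = (m:ℝ)*((k:ℝ)*400) := by ring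
          _ ≤ 2*(k:ℝ)*((k:ℝ)*400) := mul_le_mul_of_nonneg_right hmk2 (by positivity)
          _ = 800*(k:ℝ)^2 := by ring
          _ ≤ t := ht800
          _ = 1*t := by ring
      have heq : 2*t - 2*(k:ℝ) = (2*t)*(1 - (k:ℝ)/t) := by
        have h1 : (k:ℝ)/t * t = k := div_mul_cancel₀ (k:ℝ) (ne_of_gt htpos)
        linear_combination 2*h1
      rw [heq]
      have hbern : 1 - (m:ℝ)*((k:ℝ)/t) ≤ (1 - (k:ℝ)/t)^m := by
        have hb := one_add_mul_le_pow (a := -((k:ℝ)/t)) (by linarith : (-2:ℝ) ≤ -((k:ℝ)/t)) m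
        calc 1 - (m:ℝ)*((k:ℝ)/t) = 1 + (m:ℝ)*(-((k:ℝ)/t)) := by ring
          _ ≤ (1 + -((k:ℝ)/t))^m := hb
          _ = (1 - (k:ℝ)/t)^m := by ring_nf
      have hfin : (399/400 : ℝ) ≤ (1-(k:ℝ)/t)^m := by linarith
      calc (399/400:ℝ) * (2*t)^m ≤ (1-(k:ℝ)/t)^m * (2*t)^m :=
            mul_le_mul_of_nonneg_right hfin (by positivity)
        _ = (2*t*(1-(k:ℝ)/t))^m := by rw [← mul_pow]; congr 1; ring
    · intro i hi
      have hiR : (i:ℝ) ≤ (m:ℝ) - 1 := by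
        have h' : (i:ℝ) + 1 ≤ (m:ℝ) := by exact_mod_cast hi
        linarith
      rw [hmR] at hiR
      linarith
  -- error term bounds
  have herr : ∀ r ∈ range m, |(-1:ℝ)^r * rchoose (2*t-1) r *
      (if Even (m - r) then (-1:ℝ)^((m-r)/2) * rchoose b ((m-r)/2) else 0)|
        ≤ B * (1/28)^(m - r) := by
    intro r hr
    rw [mem_range] at hr
    by_cases hpar : Even (m - r)
    · rw [if_pos hpar]
      obtain ⟨j, hj⟩ := hpar
      have h2j : m - r = 2*j := by omega
      have hrj : r + 2*j = m := by omega
      have hjk : j ≤ k - 1 := by omega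
      have hjkR : (j:ℝ) ≤ (k:ℝ) := by
        have : j ≤ k := by omega
        exact_mod_cast this
      -- |rchoose (2t-1) r| ≤ (2t)^r / r!
      have hbound1 : |rchoose (2*t-1) r| ≤ (2*t)^r / r.factorial := by
        apply rchoose_abs_le _ _ _ (by linarith)
        intro i hi
        have hiR : (i:ℝ) + 1 ≤ (m:ℝ) := by
          have : (i:ℝ) + 1 ≤ (r:ℝ) := by exact_mod_cast hi
          have : (r:ℝ) ≤ (m:ℝ) := by exact_mod_cast le_of_lt hr
          linarith
        rw [abs_le]
        constructor
        · rw [hmR] at hiR; linarith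
        · linarith [htpos]
      -- |rchoose b j| ≤ (n/2)^j / j!
      have hbound2 : |rchoose b j| ≤ ((n:ℝ)/2)^j / j.factorial := by
        apply rchoose_abs_le _ _ _ (by linarith)
        intro i hi
        have hiR : (i:ℝ) ≤ (k:ℝ) := by
          have : (i:ℝ) < (j:ℝ) := by exact_mod_cast hi
          linarith
        have hkn : (k:ℝ) ≤ (n:ℝ)/2 := by nlinarith
        rw [abs_le]
        constructor
        · linarith
        · linarith
      -- combine
      have habs : |(-1:ℝ)^r * rchoose (2*t-1) r * ((-1:ℝ)^j * rchoose b j)|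
          = |rchoose (2*t-1) r| * |rchoose b j| := by
        rw [abs_mul, abs_mul, abs_mul, abs_pow, abs_pow, abs_neg, abs_one, one_pow, one_pow,
          one_mul, one_mul]
      rw [show (m - r)/2 = j by omega, habs]
      -- key quantitative step
      have hfr : (m.factorial : ℝ) ≤ (r.factorial : ℝ) * (2*(k:ℝ))^(2*j) := by
        have hnat := factorial_le_mul_pow r (2*j)
        rw [hrj] at hnat
        have : ((m.factorial : ℕ) : ℝ) ≤ ((r.factorial * (m + 1) ^ (2*j) : ℕ) : ℝ) := by
          exact_mod_cast hnat
        push_cast at this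
        rw [show ((m:ℝ) + 1) = 2*(k:ℝ) by rw [hmR]; ring] at this
        exact this
      have hrfpos : (0:ℝ) < (r.factorial : ℝ) := by exact_mod_cast r.factorial_pos
      have hjfpos : (0:ℝ) < (j.factorial : ℝ) := by exact_mod_cast j.factorial_pos
      have hjf1 : (1:ℝ) ≤ (j.factorial : ℝ) := by exact_mod_cast j.factorial_pos
      -- per-factor inequality
      have hfac : 392 * (k:ℝ)^2 ≤ (400:ℝ)^k := by
        exact_mod_cast sq_le_400pow k hk
      have hcore : ((n:ℝ)/2) * (2*(k:ℝ))^2 * 784 ≤ (2*t)^2 := by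
        have : 1568 * (k:ℝ)^2 * n ≤ 4 * ((400:ℝ)^k * n) := by nlinarith
        nlinarith
      have hppow : (((n:ℝ)/2) * ((2*(k:ℝ))^2 * 784))^j ≤ ((2*t)^2)^j := by
        apply pow_le_pow_left₀ (by positivity)
        nlinarith [hcore]
      calc |rchoose (2*t-1) r| * |rchoose b j|
          ≤ ((2*t)^r / r.factorial) * (((n:ℝ)/2)^j / j.factorial) := by
            apply mul_le_mul hbound1 hbound2 (abs_nonneg _) (by positivity)
        _ ≤ B * (1/28)^(m - r) := by
            rw [hBdef, h2j]
            have hrhs : (2*t)^m/(m.factorial:ℝ) * ((1:ℝ)/28)^(2*j)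
                = (2*t)^m / ((m.factorial:ℝ) * 784^j) := by
              rw [show ((1:ℝ)/28)^(2*j) = 1/(784:ℝ)^j by
                rw [div_pow, one_pow, pow_mul]; norm_num]
              ring
            rw [hrhs, div_mul_div_comm, div_le_div_iff₀ (by positivity) (by positivity)]
            have hm_split : (2*t)^m = (2*t)^r * ((2*t)^2)^j := by
              rw [← hrj, pow_add, pow_mul]
            calc (2*t)^r * ((n:ℝ)/2)^j * ((m.factorial:ℝ) * 784^j)
                ≤ (2*t)^r * ((n:ℝ)/2)^j * (((r.factorial:ℝ) * (2*(k:ℝ))^(2*j)) * 784^j) :=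
                  mul_le_mul_of_nonneg_left
                    (mul_le_mul_of_nonneg_right hfr (by positivity)) (by positivity)
              _ = (((n:ℝ)/2) * ((2*(k:ℝ))^2 * 784))^j * ((2*t)^r * (r.factorial:ℝ)) := by
                  rw [show (((n:ℝ)/2) * ((2*(k:ℝ))^2 * 784))^j
                    = ((n:ℝ)/2)^j * ((2*(k:ℝ))^(2*j) * 784^j) by
                    rw [mul_pow, mul_pow, ← pow_mul]]
                  ring
              _ ≤ ((2*t)^2)^j * ((2*t)^r * (r.factorial:ℝ)) := by
                  apply mul_le_mul_of_nonneg_right hppow (by positivity)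
              _ = (2*t)^m * (r.factorial:ℝ) * 1 := by rw [hm_split]; ring
              _ ≤ (2*t)^m * ((r.factorial:ℝ) * (j.factorial:ℝ)) := by
                  rw [mul_assoc]
                  apply mul_le_mul_of_nonneg_left _ (by positivity)
                  apply mul_le_mul_of_nonneg_left hjf1 (by positivity)
    · rw [if_neg hpar]
      simp only [mul_zero, abs_zero]
      positivity
  -- geometric sum bound
  have hgeo : ∑ r ∈ range m, (B * (1/28:ℝ)^(m - r)) ≤ B / 27 := by
    rw [← Finset.mul_sum]
    have h2 : ∑ r ∈ range m, ((1/28:ℝ))^(m - r) = ∑ r ∈ range m, ((1/28:ℝ))^(r+1) := by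
      rw [← Finset.sum_range_reflect (fun r => ((1/28:ℝ))^(r+1)) m]
      apply Finset.sum_congr rfl
      intro r hr
      rw [mem_range] at hr
      congr 1
      omega
    rw [h2]
    have h3 : ∑ r ∈ range m, ((1/28:ℝ))^(r+1) = (1/28) * ∑ r ∈ range m, ((1/28:ℝ))^r := by
      rw [Finset.mul_sum]
      apply sum_congr rfl
      intro r hr
      rw [pow_succ]
      ring
    have h4 : ∑ r ∈ range m, ((1/28:ℝ))^r ≤ 28/27 := by
      rw [geom_sum_eq (by norm_num : (1/28:ℝ) ≠ 1)]
      have hp : (0:ℝ) ≤ (1/28:ℝ)^m := by positivity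
      rw [div_le_iff_of_neg (by norm_num : (1/28:ℝ) - 1 < 0)]
      linarith
    rw [h3]
    calc B * ((1/28) * ∑ r ∈ range m, ((1/28:ℝ))^r) ≤ B * ((1/28) * (28/27)) := by
          apply mul_le_mul_of_nonneg_left _ hBpos.le
          apply mul_le_mul_of_nonneg_left h4 (by norm_num)
      _ = B / 27 := by ring
  have hsum : |∑ r ∈ range m, ((-1:ℝ)^r * rchoose (2*t-1) r *
      (if Even (m - r) then (-1:ℝ)^((m-r)/2) * rchoose b ((m-r)/2) else 0))| ≤ B / 27 :=
    le_trans (Finset.abs_sum_le_sum_abs _ _) (le_trans (Finset.sum_le_sum herr) hgeo)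
  -- split top term
  have hsplit : kraw m (n-1) x ≤ B/27 - (399/400)*B := by
    rw [hkraw, Finset.sum_range_succ]
    have htop : (-1:ℝ)^m * rchoose (2*t-1) m *
        (if Even (m - m) then (-1:ℝ)^((m-m)/2) * rchoose b ((m-m)/2) else 0)
          = -(rchoose (2*t-1) m) := by
      simp only [Nat.sub_self]
      rw [if_pos Even.zero, Nat.zero_div, pow_zero, rchoose_zero]
      have hodd : Odd m := ⟨k-1, by omega⟩
      rw [hodd.neg_one_pow]
      ring
    rw [htop]
    have h5 := le_trans (le_abs_self _) hsum
    linarith [hmain]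
  have hkrawlt : kraw m (n-1) x ≤ -((24/25)*B) := by linarith [hBpos]
  -- final numeric comparison
  have h6 : (Real.sqrt n)^m * Real.sqrt n = (n:ℝ)^k := by
    rw [← pow_succ, hm1, pow_mul, hsq]
  have hsqm : ((n:ℝ)^k / Real.sqrt n) = (Real.sqrt n)^m := by
    rw [div_eq_iff (ne_of_gt hsqpos), h6]
  have hkey := keyIneq k hk
  rw [← hmdef] at hkey
  have hCpow : (2*((20:ℝ)^k + 1))^m ≤ (2*(C:ℝ))^m :=
    pow_le_pow_left₀ (by positivity) (by linarith) m
  have hBval : B = (2*(C:ℝ))^m * (Real.sqrt n)^m / (m.factorial:ℝ) := by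
    rw [hBdef, htdef, show 2*((C:ℝ)*Real.sqrt n) = (2*(C:ℝ))*Real.sqrt n by ring, mul_pow]
  have hfinal : 2 * (20:ℝ)^k * ((n:ℝ)^k / Real.sqrt n) < (24/25)*B := by
    rw [hsqm, hBval]
    have hE : (0:ℝ) < (Real.sqrt n)^m := by positivity
    have hc : 2*(20:ℝ)^k < (24/25)*(2*(C:ℝ))^m / (m.factorial:ℝ) := by
      rw [lt_div_iff₀ hfactpos]
      calc 2*(20:ℝ)^k * (m.factorial:ℝ) < (24/25)*(2*((20:ℝ)^k+1))^m := hkey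
        _ ≤ (24/25)*(2*(C:ℝ))^m := mul_le_mul_of_nonneg_left hCpow (by norm_num)
    calc 2*(20:ℝ)^k * (Real.sqrt n)^m
        < ((24/25)*(2*(C:ℝ))^m / (m.factorial:ℝ)) * (Real.sqrt n)^m :=
          mul_lt_mul_of_pos_right hc hE
      _ = (24/25)*((2*(C:ℝ))^m * (Real.sqrt n)^m / (m.factorial:ℝ)) := by ring
  have hgoal : kraw m (n-1) x < -(2 * (20:ℝ)^k * ((n:ℝ)^k / Real.sqrt n)) := by linarith
  have hd : d2k k n ((C:ℝ)*Real.sqrt n)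
      = (1/2)*(((n-1).choose (2*k-1):ℝ) + kraw m (n-1) x) := by
    rw [d2k, ← hmdef, hxdef, htdef]
  rw [hd]
  linarith [hgoal]

end Helpers
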